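/- For k ≥ 1 and z > 0, the derivative of z/p_k(z) equals (1 − φ_k(z))/p_k(z), where φ_k(z) = z·P(Poi(z)=k−1)/P(Poi(z)≥k). Consequently z/p_k(z) has a unique stationary point at the root z* of φ_k(z)=1, and z* is its unique absolute minimum point on (0,∞). -/

import Mathlib

open Real Filter Set

/-- `truncExpSum k z = Σ_{j≥k} z^j/j!`. -/
noncomputable def truncExpSum (k : ℕ) (z : ℝ) : ℝ :=
  ∑' j : ℕ, if k ≤ j then z ^ j / (Nat.factorial j : ℝ) else 0

/-- `poisTail k z = P(Poi(z) ≥ k) = e^{-z} Σ_{j≥k} z^j/j!`. -/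
noncomputable def poisTail (k : ℕ) (z : ℝ) : ℝ := Real.exp (-z) * truncExpSum k z

/-- Mean of Poisson(z) conditioned on being ≥ k: `ψ_k(z) = z f_{k-1}(z)/f_k(z)`. -/
noncomputable def truncMean (k : ℕ) (z : ℝ) : ℝ :=
  z * truncExpSum (k - 1) z / truncExpSum k z

/-- Second moment of the truncated Poisson. -/
noncomputable def truncSecondMoment (k : ℕ) (z : ℝ) : ℝ :=
  (∑' j : ℕ, if k ≤ j then (j : ℝ) ^ 2 * z ^ j / (Nat.factorial j : ℝ) else 0)
    / truncExpSum k z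

/-- Variance of the truncated Poisson. -/
noncomputable def truncVar (k : ℕ) (z : ℝ) : ℝ :=
  truncSecondMoment k z - (truncMean k z) ^ 2

/-- `φ_r(z) = z·P(Poi(z)=r−1)/P(Poi(z)≥r)` for `r ≥ 1`, with `φ_0 := 0`. -/
noncomputable def phiP (r : ℕ) (z : ℝ) : ℝ :=
  if r = 0 then 0
  else z * (Real.exp (-z) * z ^ (r - 1) / (Nat.factorial (r - 1) : ℝ)) / poisTail r z

/-- `H(z_i,z_o) = (1 − φ_{k_1}(z_i))(1 − φ_{k_2}(z_o)) − φ_{k_1−1}(z_i)φ_{k_2−1}(z_o)`. -/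
noncomputable def Hfun (k1 k2 : ℕ) (zi zo : ℝ) : ℝ :=
  (1 - phiP k1 zi) * (1 - phiP k2 zo) - phiP (k1 - 1) zi * phiP (k2 - 1) zo

/-- `Ψ(z_i,z_o) = max{ z_i/(p_{k_1}(z_i)p_{k_2−1}(z_o)), z_o/(p_{k_2}(z_o)p_{k_1−1}(z_i)) }`. -/
noncomputable def Psi (k1 k2 : ℕ) (zi zo : ℝ) : ℝ :=
  max (zi / (poisTail k1 zi * poisTail (k2 - 1) zo))
      (zo / (poisTail k2 zo * poisTail (k1 - 1) zi))

lemma summable_ite (k : ℕ) (z : ℝ) :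
    Summable (fun j : ℕ => if k ≤ j then z ^ j / (Nat.factorial j : ℝ) else 0) := by
  apply Summable.of_norm_bounded (Real.summable_pow_div_factorial |z|)
  intro j
  by_cases h : k ≤ j
  · simp [h, abs_div, abs_pow, abs_of_nonneg (Nat.cast_nonneg _ : (0:ℝ) ≤ (Nat.factorial j : ℝ))]
  · simp only [h, if_false, norm_zero]
    positivity

lemma exp_eq_tsum' (z : ℝ) : Real.exp z = ∑' j : ℕ, z ^ j / (Nat.factorial j : ℝ) := by
  rw [Real.exp_eq_exp_ℝ, NormedSpace.exp_eq_tsum_div]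

lemma truncExpSum_eq (k : ℕ) (z : ℝ) :
    truncExpSum k z = Real.exp z - ∑ j ∈ Finset.range k, z ^ j / (Nat.factorial j : ℝ) := by
  have hf := Real.summable_pow_div_factorial z
  have hg := summable_ite k z
  have h1 := Summable.sum_add_tsum_nat_add (f := fun j : ℕ => if k ≤ j then z ^ j / (Nat.factorial j : ℝ) else 0) k hg
  have h2 := Summable.sum_add_tsum_nat_add (f := fun j : ℕ => z ^ j / (Nat.factorial j : ℝ)) k hf
  have hz : ∑ j ∈ Finset.range k, (if k ≤ j then z ^ j / (Nat.factorial j : ℝ) else 0) = 0 := by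
    apply Finset.sum_eq_zero
    intro j hj
    simp [Nat.not_le.mpr (Finset.mem_range.mp hj)]
  have he : (fun i : ℕ => if k ≤ i + k then z ^ (i + k) / (Nat.factorial (i + k) : ℝ) else 0)
      = fun i : ℕ => z ^ (i + k) / (Nat.factorial (i + k) : ℝ) := by
    funext i; simp
  rw [truncExpSum, ← h1, hz, zero_add, he, exp_eq_tsum', ← h2]
  ring

lemma truncExpSum_pos (k : ℕ) {z : ℝ} (hz : 0 < z) : 0 < truncExpSum k z := by
  apply Summable.tsum_pos (summable_ite k z) _ k
  · simp [le_refl]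
    positivity
  · intro j
    by_cases h : k ≤ j
    · simp only [h, if_true]; positivity
    · simp [h]

lemma poisTail_pos (k : ℕ) {z : ℝ} (hz : 0 < z) : 0 < poisTail k z :=
  mul_pos (Real.exp_pos _) (truncExpSum_pos k hz)

lemma hasDerivAt_partial (k : ℕ) (z : ℝ) :
    HasDerivAt (fun z : ℝ => ∑ j ∈ Finset.range (k + 1), z ^ j / (Nat.factorial j : ℝ))
      (∑ j ∈ Finset.range k, z ^ j / (Nat.factorial j : ℝ)) z := by
  have h : HasDerivAt (fun z : ℝ => ∑ j ∈ Finset.range (k + 1), z ^ j / (Nat.factorial j : ℝ))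
      (∑ j ∈ Finset.range (k + 1), (j : ℝ) * z ^ (j - 1) / (Nat.factorial j : ℝ)) z := by
    apply HasDerivAt.fun_sum
    intro j _
    exact (hasDerivAt_pow j z).div_const _
  convert h using 1
  rw [Finset.sum_range_succ']
  have h0 : ((0 : ℕ) : ℝ) * z ^ (0 - 1) / (Nat.factorial 0 : ℝ) = 0 := by norm_num
  rw [h0, add_zero]
  apply Finset.sum_congr rfl
  intro i _
  have hfac : (Nat.factorial (i + 1) : ℝ) = (i + 1 : ℝ) * (Nat.factorial i : ℝ) := by
    rw [Nat.factorial_succ]; push_cast; ring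
  have hne : (Nat.factorial i : ℝ) ≠ 0 := Nat.cast_ne_zero.mpr (Nat.factorial_ne_zero i)
  simp only [Nat.add_sub_cancel, hfac]
  push_cast
  field_simp

lemma hasDerivAt_truncExpSum (k : ℕ) (z : ℝ) :
    HasDerivAt (fun z => truncExpSum (k + 1) z) (truncExpSum k z) z := by
  have hfun : (fun z => truncExpSum (k + 1) z)
      = fun z : ℝ => Real.exp z - ∑ j ∈ Finset.range (k + 1), z ^ j / (Nat.factorial j : ℝ) := by
    funext w; exact truncExpSum_eq _ w
  rw [hfun, truncExpSum_eq]
  exact (Real.hasDerivAt_exp z).sub (hasDerivAt_partial k z)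

lemma hasDerivAt_poisTail (k : ℕ) (z : ℝ) :
    HasDerivAt (fun z => poisTail (k + 1) z)
      (Real.exp (-z) * z ^ k / (Nat.factorial k : ℝ)) z := by
  have h1 : HasDerivAt (fun z : ℝ => Real.exp (-z)) (Real.exp (-z) * (-1)) z :=
    (Real.hasDerivAt_exp (-z)).comp z (hasDerivAt_neg z)
  have h := h1.fun_mul (hasDerivAt_truncExpSum k z)
  have hfun : (fun z : ℝ => Real.exp (-z) * truncExpSum (k+1) z) = fun z => poisTail (k+1) z := rfl
  rw [hfun] at h
  refine h.congr_deriv ?_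
  rw [truncExpSum_eq k z, truncExpSum_eq (k+1) z, Finset.sum_range_succ]
  ring

lemma phi_eq (m : ℕ) {z : ℝ} (hz : 0 < z) :
    phiP (m + 1) z = z ^ (m + 1) / ((Nat.factorial m : ℝ) * truncExpSum (m + 1) z) := by
  have hT := truncExpSum_pos (m + 1) hz
  have he := Real.exp_pos (-z)
  rw [phiP]
  simp only [Nat.succ_ne_zero, if_false, Nat.add_sub_cancel, poisTail]
  have hfacne : (Nat.factorial m : ℝ) ≠ 0 := Nat.cast_ne_zero.mpr (Nat.factorial_ne_zero m)
  rw [div_eq_div_iff (by positivity) (by positivity)]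
  field_simp
  ring

lemma hasDerivAt_ratio (m : ℕ) {z : ℝ} (hz : 0 < z) :
    HasDerivAt (fun z : ℝ => z / poisTail (m + 1) z)
      ((1 - phiP (m + 1) z) / poisTail (m + 1) z) z := by
  have hp := poisTail_pos (m + 1) hz
  have hpne : poisTail (m + 1) z ≠ 0 := ne_of_gt hp
  have h := (hasDerivAt_id z).fun_div (hasDerivAt_poisTail m z) hpne
  refine h.congr_deriv ?_
  rw [phiP]
  simp only [Nat.succ_ne_zero, if_false, Nat.add_sub_cancel, id_eq]
  field_simp

lemma phi_strictAnti (m : ℕ) {a b : ℝ} (ha : 0 < a) (hab : a < b) :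
    phiP (m + 1) b < phiP (m + 1) a := by
  have hb : 0 < b := ha.trans hab
  have hTa := truncExpSum_pos (m + 1) ha
  have hTb := truncExpSum_pos (m + 1) hb
  have hfac : (0 : ℝ) < (Nat.factorial m : ℝ) := Nat.cast_pos.mpr (Nat.factorial_pos m)
  rw [phi_eq m ha, phi_eq m hb, div_lt_div_iff₀ (by positivity) (by positivity)]
  have key : truncExpSum (m + 1) a * b ^ (m + 1) < truncExpSum (m + 1) b * a ^ (m + 1) := by
    rw [truncExpSum, truncExpSum, ← tsum_mul_right, ← tsum_mul_right]
    apply Summable.tsum_lt_tsum_of_nonneg (i := m + 2)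
    · intro j
      by_cases h : m + 1 ≤ j
      · simp only [h, if_true]; positivity
      · simp [h]
    · intro j
      by_cases h : m + 1 ≤ j
      · simp only [h, if_true]
        rw [div_mul_eq_mul_div, div_mul_eq_mul_div]
        gcongr ?_ / _
        obtain ⟨d, rfl⟩ := Nat.exists_eq_add_of_le h
        rw [pow_add a (m+1) d, pow_add b (m+1) d]
        have hd : a ^ d ≤ b ^ d := pow_le_pow_left₀ ha.le hab.le d
        calc a ^ (m+1) * a ^ d * b ^ (m+1) = a ^ (m+1) * b ^ (m+1) * a ^ d := by ring
          _ ≤ a ^ (m+1) * b ^ (m+1) * b ^ d :=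
              mul_le_mul_of_nonneg_left hd (by positivity)
          _ = b ^ (m+1) * b ^ d * a ^ (m+1) := by ring
      · simp [h]
    · have h : m + 1 ≤ m + 2 := by omega
      simp only [h, if_true]
      rw [div_mul_eq_mul_div, div_mul_eq_mul_div]
      have hnum : a ^ (m+2) * b ^ (m+1) < b ^ (m+2) * a ^ (m+1) := by
        have hlt : a * (a*b) ^ (m+1) < b * (a*b) ^ (m+1) :=
          mul_lt_mul_of_pos_right hab (by positivity)
        calc a ^ (m+2) * b ^ (m+1) = a * (a*b) ^ (m+1) := by rw [mul_pow]; ring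
          _ < b * (a*b) ^ (m+1) := hlt
          _ = b ^ (m+2) * a ^ (m+1) := by rw [mul_pow]; ring
      gcongr ?_ / _
    · exact (summable_ite (m + 1) b).mul_right _
  calc b ^ (m + 1) * ((Nat.factorial m : ℝ) * truncExpSum (m + 1) a)
      = (Nat.factorial m : ℝ) * (truncExpSum (m + 1) a * b ^ (m + 1)) := by ring
    _ < (Nat.factorial m : ℝ) * (truncExpSum (m + 1) b * a ^ (m + 1)) := by
        exact mul_lt_mul_of_pos_left key hfac
    _ = a ^ (m + 1) * ((Nat.factorial m : ℝ) * truncExpSum (m + 1) b) := by ring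

lemma continuous_truncExpSum (k : ℕ) : Continuous (fun z => truncExpSum k z) := by
  have hfun : (fun z => truncExpSum k z)
      = fun z : ℝ => Real.exp z - ∑ j ∈ Finset.range k, z ^ j / (Nat.factorial j : ℝ) := by
    funext w; exact truncExpSum_eq _ w
  rw [hfun]
  exact Real.continuous_exp.sub (by continuity)

/-- upper bound on the tail at `z = 1/4`. -/
lemma trunc_small (m : ℕ) (hm : 1 ≤ m) :
    (Nat.factorial m : ℝ) * truncExpSum (m + 1) (1/4) < (1/4) ^ (m + 1) := by
  have hb : truncExpSum (m + 1) (1/4 : ℝ)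
      ≤ ((1/4 : ℝ) ^ (m + 1) * (4/3)) / (Nat.factorial (m + 1) : ℝ) := by
    have hgeo : Summable (fun j : ℕ => (1/4 : ℝ) ^ j) :=
      summable_geometric_of_lt_one (by norm_num) (by norm_num)
    have hg : Summable (fun j : ℕ => (if m + 1 ≤ j then (1/4 : ℝ) ^ j else 0)
        / (Nat.factorial (m + 1) : ℝ)) := by
      apply Summable.div_const
      apply hgeo.of_nonneg_of_le (fun j => by positivity)
      intro j; by_cases h : m + 1 ≤ j <;> simp [h] <;> positivity
    have hle : truncExpSum (m + 1) (1/4)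
        ≤ ∑' j : ℕ, (if m + 1 ≤ j then (1/4 : ℝ) ^ j else 0) / (Nat.factorial (m + 1) : ℝ) := by
      apply Summable.tsum_le_tsum _ (summable_ite (m+1) (1/4)) hg
      intro j
      by_cases h : m + 1 ≤ j
      · simp only [h, if_true]
        apply div_le_div_of_nonneg_left (by positivity) (by positivity)
        exact_mod_cast Nat.factorial_le h
      · simp [h]
    have hval : ∑' j : ℕ, (if m + 1 ≤ j then (1/4 : ℝ) ^ j else 0)
        = (1/4 : ℝ) ^ (m + 1) * (4/3) := by
      have hgite : Summable (fun j : ℕ => if m + 1 ≤ j then (1/4 : ℝ) ^ j else 0) := by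
        apply hgeo.of_nonneg_of_le (fun j => by positivity)
        intro j; by_cases h : m + 1 ≤ j <;> simp [h] <;> positivity
      have h1 := Summable.sum_add_tsum_nat_add
        (f := fun j : ℕ => if m + 1 ≤ j then (1/4 : ℝ) ^ j else 0) (m+1) hgite
      have hz : ∑ j ∈ Finset.range (m+1), (if m + 1 ≤ j then (1/4:ℝ) ^ j else 0) = 0 := by
        apply Finset.sum_eq_zero
        intro j hj; simp [Nat.not_le.mpr (Finset.mem_range.mp hj)]
      have he : (fun i : ℕ => if m + 1 ≤ i + (m+1) then (1/4:ℝ) ^ (i + (m+1)) else 0)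
          = fun i : ℕ => (1/4:ℝ) ^ (m+1) * (1/4) ^ i := by
        funext i; simp [pow_add]; ring
      rw [← h1, hz, zero_add, he, tsum_mul_left, tsum_geometric_of_lt_one (by norm_num) (by norm_num)]
      norm_num
    rw [tsum_div_const, hval] at hle
    exact hle
  have hfac : (Nat.factorial (m+1) : ℝ) = (m + 1 : ℝ) * (Nat.factorial m : ℝ) := by
    rw [Nat.factorial_succ]; push_cast; ring
  have hfacpos : (0:ℝ) < (Nat.factorial m : ℝ) := Nat.cast_pos.mpr (Nat.factorial_pos m)
  have hm1 : (2:ℝ) ≤ (m:ℝ) + 1 := by exact_mod_cast Nat.succ_le_succ hm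
  calc (Nat.factorial m : ℝ) * truncExpSum (m + 1) (1/4)
      ≤ (Nat.factorial m : ℝ) * (((1/4:ℝ) ^ (m + 1) * (4/3)) / (Nat.factorial (m + 1) : ℝ)) :=
        mul_le_mul_of_nonneg_left hb hfacpos.le
    _ = (1/4:ℝ) ^ (m + 1) * (4 / (3 * ((m:ℝ) + 1))) := by
        rw [hfac]; field_simp
    _ < (1/4:ℝ) ^ (m + 1) * 1 := by
        apply mul_lt_mul_of_pos_left _ (by positivity)
        rw [div_lt_one (by positivity)]
        nlinarith
    _ = (1/4:ℝ) ^ (m + 1) := mul_one _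

/-- lower bound on the tail at a large `z`. -/
lemma trunc_big (m : ℕ) :
    ((m:ℝ)+1) * ((m:ℝ)+2) + 1 > 0 ∧
    (Nat.factorial m : ℝ) * truncExpSum (m + 1) (((m:ℝ)+1) * ((m:ℝ)+2) + 1)
      > (((m:ℝ)+1) * ((m:ℝ)+2) + 1) ^ (m + 1) := by
  set M : ℝ := ((m:ℝ)+1) * ((m:ℝ)+2) + 1 with hM
  have hMpos : 0 < M := by positivity
  refine ⟨hMpos, ?_⟩
  have hterm : M ^ (m + 2) / (Nat.factorial (m + 2) : ℝ) ≤ truncExpSum (m + 1) M := by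
    have h := Summable.le_tsum (summable_ite (m+1) M) (m+2) (fun j _ => by
      by_cases h : m + 1 ≤ j
      · simp only [h, if_true]; positivity
      · simp [h])
    rwa [if_pos (by omega : m + 1 ≤ m + 2)] at h
  have hfac2 : (Nat.factorial (m + 2) : ℝ)
      = ((m:ℝ) + 2) * (((m:ℝ) + 1) * (Nat.factorial m : ℝ)) := by
    rw [Nat.factorial_succ, Nat.factorial_succ]; push_cast; ring
  have hfacpos : (0:ℝ) < (Nat.factorial m : ℝ) := Nat.cast_pos.mpr (Nat.factorial_pos m)
  calc M ^ (m + 1) = 1 * M ^ (m + 1) := (one_mul _).symm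
    _ < (M / (((m:ℝ)+1) * ((m:ℝ)+2))) * M ^ (m + 1) := by
        apply mul_lt_mul_of_pos_right _ (by positivity)
        rw [lt_div_iff₀ (by positivity)]
        rw [hM]; nlinarith [sq_nonneg ((m:ℝ))]
    _ = (Nat.factorial m : ℝ) * (M ^ (m + 2) / (Nat.factorial (m + 2) : ℝ)) := by
        rw [hfac2, pow_succ]
        field_simp
        ring
    _ ≤ (Nat.factorial m : ℝ) * truncExpSum (m + 1) M :=
        mul_le_mul_of_nonneg_left hterm hfacpos.le

lemma exists_root (m : ℕ) (hm : 1 ≤ m) : ∃ z : ℝ, 0 < z ∧ phiP (m + 1) z = 1 := by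
  set G : ℝ → ℝ := fun z => (Nat.factorial m : ℝ) * truncExpSum (m + 1) z - z ^ (m + 1) with hG
  have hcont : Continuous G := by
    apply Continuous.sub
    · exact continuous_const.mul (continuous_truncExpSum (m+1))
    · continuity
  set M : ℝ := ((m:ℝ)+1) * ((m:ℝ)+2) + 1 with hM
  obtain ⟨hMpos, hbig⟩ := trunc_big m
  have hsmall := trunc_small m hm
  have hle : (1/4 : ℝ) ≤ M := by rw [hM]; nlinarith [sq_nonneg ((m:ℝ))]
  have hmem : (0:ℝ) ∈ Icc (G (1/4)) (G M) := by
    constructor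
    · simp only [hG]; linarith
    · simp only [hG]; linarith
  obtain ⟨c, hc, hGc⟩ := intermediate_value_Icc hle (hcont.continuousOn) hmem
  have hcpos : 0 < c := lt_of_lt_of_le (by norm_num) hc.1
  refine ⟨c, hcpos, ?_⟩
  have hTc := truncExpSum_pos (m+1) hcpos
  have hfacpos : (0:ℝ) < (Nat.factorial m : ℝ) := Nat.cast_pos.mpr (Nat.factorial_pos m)
  have heq : (Nat.factorial m : ℝ) * truncExpSum (m + 1) c = c ^ (m + 1) := by
    have : G c = 0 := hGc
    simp only [hG] at this; linarith
  rw [phi_eq m hcpos, heq, div_self (by positivity)]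


/-- `(z/p_k(z))' = (1 − φ_k(z))/p_k(z)`; for `k ≥ 2` the root `z*` of
`φ_k(z)=1` is unique and is the unique absolute minimum point of `z/p_k(z)` on `(0,∞)`. -/
theorem stmt6 (k : ℕ) (hk : 1 ≤ k) :
    (∀ z : ℝ, 0 < z →
      HasDerivAt (fun z : ℝ => z / poisTail k z) ((1 - phiP k z) / poisTail k z) z) ∧
    (2 ≤ k → ∃! zstar : ℝ, 0 < zstar ∧ phiP k zstar = 1) ∧
    (2 ≤ k → ∀ zstar : ℝ, 0 < zstar → phiP k zstar = 1 →
      ∀ z : ℝ, 0 < z → z ≠ zstar →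
        zstar / poisTail k zstar < z / poisTail k z) := by
  obtain ⟨m, rfl⟩ : ∃ m, k = m + 1 := ⟨k - 1, (Nat.succ_pred_eq_of_pos hk).symm⟩
  have hderiv : ∀ z : ℝ, 0 < z →
      HasDerivAt (fun z : ℝ => z / poisTail (m+1) z) ((1 - phiP (m+1) z) / poisTail (m+1) z) z :=
    fun z hz => hasDerivAt_ratio m hz
  refine ⟨hderiv, ?_, ?_⟩
  · intro hk2
    have hm : 1 ≤ m := by omega
    obtain ⟨c, hc, hphi⟩ := exists_root m hm
    refine ⟨c, ⟨hc, hphi⟩, ?_⟩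
    rintro y ⟨hy, hyphi⟩
    rcases lt_trichotomy y c with h | h | h
    · exfalso
      have := phi_strictAnti m hy h
      rw [hphi, hyphi] at this; exact lt_irrefl 1 this
    · exact h
    · exfalso
      have := phi_strictAnti m hc h
      rw [hphi, hyphi] at this; exact lt_irrefl 1 this
  · intro _ zstar hzs hphi z hz hne
    have hcont : ∀ a b : ℝ, 0 < a →
        ContinuousOn (fun z : ℝ => z / poisTail (m+1) z) (Icc a b) := by
      intro a b ha
      intro w hw
      exact ((hderiv w (lt_of_lt_of_le ha hw.1)).continuousAt).continuousWithinAt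
    rcases lt_or_gt_of_ne hne with h | h
    · -- z < zstar : f strictly anti on [z, zstar]
      have hanti : StrictAntiOn (fun z : ℝ => z / poisTail (m+1) z) (Icc z zstar) := by
        apply strictAntiOn_of_deriv_neg (convex_Icc _ _) (hcont _ _ hz)
        intro w hw
        rw [interior_Icc] at hw
        have hwpos : 0 < w := hz.trans hw.1
        rw [(hderiv w hwpos).deriv]
        apply div_neg_of_neg_of_pos _ (poisTail_pos (m+1) hwpos)
        have hgt : 1 < phiP (m+1) w := by
          have := phi_strictAnti m hwpos hw.2
          rwa [hphi] at this
        linarith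
      exact hanti (left_mem_Icc.mpr h.le) (right_mem_Icc.mpr h.le) h
    · -- zstar < z : f strictly mono on [zstar, z]
      have hmono : StrictMonoOn (fun z : ℝ => z / poisTail (m+1) z) (Icc zstar z) := by
        apply strictMonoOn_of_deriv_pos (convex_Icc _ _) (hcont _ _ hzs)
        intro w hw
        rw [interior_Icc] at hw
        have hwpos : 0 < w := hzs.trans hw.1
        rw [(hderiv w hwpos).deriv]
        apply div_pos _ (poisTail_pos (m+1) hwpos)
        have hlt : phiP (m+1) w < 1 := by
          have := phi_strictAnti m hzs hw.1
          rwa [hphi] at this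
        linarith
      exact hmono (left_mem_Icc.mpr h.le) (right_mem_Icc.mpr h.le) h
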